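/- Let y : V → ℝ^n be a differentiable map on a neighborhood V ⊆ U of 0 with y_s(x) ≠ 0 for all s and all x ∈ V, satisfying the system ∂y_r/∂x_u + Σ_{α∈ℤ^n} f_{rαu}(x) y(x)^α = 0 for all 1 ≤ r ≤ n, 1 ≤ u ≤ k and x ∈ V, where for every 1 ≤ r ≤ n, 1 ≤ u ≤ k and x ∈ V the family (α ↦ f_{rαu}(x) y(x)^α) is absolutely summable. For α ∈ ℤ^n define y_α : V → ℝ by y_α(x) = y_1(x)^{α_1}⋯y_n(x)^{α_n}. Then for every α ∈ ℤ^n, 1 ≤ u ≤ k and x ∈ V, the family (γ ∈ ℤ^n ↦ h_{αγu}(x) y_γ(x)) is summable and ∂y_α/∂x_u + Σ_{γ∈ℤ^n} h_{αγu}(x) y_γ(x) = 0. -/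

import Mathlib

set_option maxHeartbeats 1000000


/-- `h_{αβu} = ∑_{s=1}^n α_s · f_{s,(β−α+e_s),u}`. -/
noncomputable def hfun {n k : ℕ} (f : Fin n → (Fin n → ℤ) → Fin k → (Fin k → ℝ) → ℝ)
    (α β : Fin n → ℤ) (u : Fin k) (x : Fin k → ℝ) : ℝ :=
  ∑ s, (α s : ℝ) * f s (β - α + Pi.single s 1) u x

/-- If `y` is a differentiable, nowhere-vanishing componentwise, solution on `V ⊆ U` of the
nonlinear system `∂y_r/∂x_u + ∑_{α∈ℤⁿ} f_{rαu}(x) y(x)^α = 0` (the families being absolutely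
summable), then the functions `y_α = y₁^{α₁}⋯y_n^{α_n}` satisfy the induced linear system
`∂y_α/∂x_u + ∑_{γ∈ℤⁿ} h_{αγu} y_γ = 0`, the families `γ ↦ h_{αγu}(x) y_γ(x)` being summable. -/
theorem stmt_14 (n k : ℕ) (hn : 1 ≤ n) (hk : 1 ≤ k)
    (U : Set (Fin k → ℝ)) (hUopen : IsOpen U) (hU0 : (0 : Fin k → ℝ) ∈ U)
    (f : Fin n → (Fin n → ℤ) → Fin k → (Fin k → ℝ) → ℝ)
    (hf : ∀ r α u, AnalyticOnNhd ℝ (f r α u) U)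
    (V : Set (Fin k → ℝ)) (hVopen : IsOpen V) (hV0 : (0 : Fin k → ℝ) ∈ V) (hVU : V ⊆ U)
    (y : (Fin k → ℝ) → Fin n → ℝ)
    (hydiff : ∀ x ∈ V, DifferentiableAt ℝ y x)
    (hyne : ∀ x ∈ V, ∀ s, y x s ≠ 0)
    (hsummable : ∀ x ∈ V, ∀ (r : Fin n) (u : Fin k),
      Summable (fun α : Fin n → ℤ => |f r α u x * ∏ i, y x i ^ α i|))
    (hsys : ∀ x ∈ V, ∀ (r : Fin n) (u : Fin k),
      fderiv ℝ (fun z => y z r) x (Pi.single u 1)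
        + ∑' α : Fin n → ℤ, f r α u x * ∏ i, y x i ^ α i = 0) :
    ∀ (α : Fin n → ℤ) (u : Fin k), ∀ x ∈ V,
      Summable (fun γ : Fin n → ℤ => hfun f α γ u x * ∏ i, y x i ^ γ i) ∧
      fderiv ℝ (fun z => ∏ i, y z i ^ α i) x (Pi.single u 1)
        + ∑' γ : Fin n → ℤ, hfun f α γ u x * ∏ i, y x i ^ γ i = 0 := by
  intro α u x hx
  classical
  set P : (Fin n → ℤ) → ℝ := fun β => ∏ i, y x i ^ β i with hP
  have hPadd : ∀ β δ : Fin n → ℤ, P (β + δ) = P β * P δ := by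
    intro β δ
    simp only [hP]
    rw [← Finset.prod_mul_distrib]
    exact Finset.prod_congr rfl fun i _ => by
      simp [zpow_add₀ (hyne x hx i)]
  have hfP : ∀ s, Summable (fun β : Fin n → ℤ => f s β u x * P β) :=
    fun s => (hsummable x hx s u).of_abs
  -- per-s summability and tsum value
  have key : ∀ s : Fin n,
      Summable (fun γ : Fin n → ℤ => (α s : ℝ) * f s (γ - α + Pi.single s 1) u x * P γ) ∧
      ∑' γ : Fin n → ℤ, (α s : ℝ) * f s (γ - α + Pi.single s 1) u x * P γ
        = (α s : ℝ) * P (α - Pi.single s 1) * ∑' β : Fin n → ℤ, f s β u x * P β := by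
    intro s
    set c : Fin n → ℤ := α - Pi.single s 1 with hc
    have heq : ∀ β : Fin n → ℤ,
        (α s : ℝ) * f s ((β + c) - α + Pi.single s 1) u x * P (β + c)
          = (α s : ℝ) * P c * (f s β u x * P β) := by
      intro β
      have h1 : (β + c) - α + Pi.single s 1 = β := by rw [hc]; abel
      rw [h1, hPadd]; ring
    have hco : ((fun γ : Fin n → ℤ => (α s : ℝ) * f s (γ - α + Pi.single s 1) u x * P γ)
        ∘ (Equiv.addRight c))
        = fun β : Fin n → ℤ => (α s : ℝ) * P c * (f s β u x * P β) := by
      funext β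
      simp only [Function.comp_apply, Equiv.coe_addRight]
      exact heq β
    have hsumm : Summable (fun γ : Fin n → ℤ =>
        (α s : ℝ) * f s (γ - α + Pi.single s 1) u x * P γ) := by
      rw [← (Equiv.addRight c).summable_iff, hco]
      exact (hfP s).mul_left _
    refine ⟨hsumm, ?_⟩
    have ht := Equiv.tsum_eq (Equiv.addRight c)
      (fun γ : Fin n → ℤ => (α s : ℝ) * f s (γ - α + Pi.single s 1) u x * P γ)
    rw [← ht]
    calc ∑' β : Fin n → ℤ, (α s : ℝ)
          * f s ((Equiv.addRight c) β - α + Pi.single s 1) u x * P ((Equiv.addRight c) β)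
        = ∑' β : Fin n → ℤ, (α s : ℝ) * P c * (f s β u x * P β) := by
          refine tsum_congr fun β => ?_
          simp only [Equiv.coe_addRight]
          exact heq β
      _ = (α s : ℝ) * P c * ∑' β : Fin n → ℤ, f s β u x * P β := tsum_mul_left
  have hexp : ∀ γ : Fin n → ℤ, hfun f α γ u x * P γ
      = ∑ s, (α s : ℝ) * f s (γ - α + Pi.single s 1) u x * P γ := by
    intro γ; rw [hfun, Finset.sum_mul]
  have hsummTot : Summable (fun γ : Fin n → ℤ => hfun f α γ u x * P γ) :=
    Summable.congr (summable_sum fun s _ => (key s).1) fun γ => (hexp γ).symm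
  refine ⟨hsummTot, ?_⟩
  have htsum : ∑' γ : Fin n → ℤ, hfun f α γ u x * P γ
      = ∑ s, (α s : ℝ) * P (α - Pi.single s 1) * ∑' β : Fin n → ℤ, f s β u x * P β := by
    rw [tsum_congr hexp, Summable.tsum_finsetSum fun s _ => (key s).1]
    exact Finset.sum_congr rfl fun s _ => (key s).2
  -- derivative
  have hyL : HasFDerivAt y (fderiv ℝ y x) x := (hydiff x hx).hasFDerivAt
  have hcomp : ∀ i : Fin n, HasFDerivAt (fun z : Fin k → ℝ => y z i)
      ((ContinuousLinearMap.proj i).comp (fderiv ℝ y x)) x :=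
    fun i => (ContinuousLinearMap.proj i (R := ℝ) (φ := fun _ : Fin n => ℝ)).hasFDerivAt.comp x hyL
  have hgi : ∀ i : Fin n, HasFDerivAt (fun z : Fin k → ℝ => y z i ^ α i)
      (((α i : ℝ) * y x i ^ (α i - 1)) • ((ContinuousLinearMap.proj i).comp (fderiv ℝ y x))) x :=
    fun i => by have := (hasDerivAt_zpow (α i) (y x i) (Or.inl (hyne x hx i))).comp_hasFDerivAt x (hcomp i); exact this
  have hprod : HasFDerivAt (fun z => ∏ i, y z i ^ α i)
      (∑ i, (∏ j ∈ Finset.univ.erase i, y x j ^ α j) •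
        (((α i : ℝ) * y x i ^ (α i - 1)) • ((ContinuousLinearMap.proj i).comp (fderiv ℝ y x)))) x :=
    HasFDerivAt.finset_prod (fun i _ => hgi i)
  have hder : fderiv ℝ (fun z => ∏ i, y z i ^ α i) x (Pi.single u 1)
      = ∑ i, (∏ j ∈ Finset.univ.erase i, y x j ^ α j) *
          (((α i : ℝ) * y x i ^ (α i - 1)) * fderiv ℝ y x (Pi.single u 1) i) := by
    rw [hprod.fderiv]
    simp [smul_eq_mul, mul_assoc]
  have hDi : ∀ i : Fin n, fderiv ℝ y x (Pi.single u 1) i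
      = -∑' β : Fin n → ℤ, f i β u x * P β := by
    intro i
    have h1 : fderiv ℝ (fun z => y z i) x = (ContinuousLinearMap.proj i).comp (fderiv ℝ y x) :=
      (hcomp i).fderiv
    have h2 := hsys x hx i u
    rw [h1] at h2
    simp only [ContinuousLinearMap.comp_apply, ContinuousLinearMap.proj_apply] at h2
    linarith
  have hPerase : ∀ s : Fin n, P (α - Pi.single s 1)
      = y x s ^ (α s - 1) * ∏ j ∈ Finset.univ.erase s, y x j ^ α j := by
    intro s
    simp only [hP]
    rw [← Finset.mul_prod_erase Finset.univ _ (Finset.mem_univ s)]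
    congr 1
    · simp
    · exact Finset.prod_congr rfl fun j hj => by
        simp [Pi.sub_apply, Pi.single_eq_of_ne (Finset.ne_of_mem_erase hj)]
  rw [hder, htsum, ← Finset.sum_add_distrib]
  apply Finset.sum_eq_zero
  intro s _
  rw [hDi s, hPerase s]
  ring
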